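/- For all L_OR formulas θ₀(x, z̄) and θ₁(x, z̄), there is an inductive formula φ(x) such that PA⁻ ⊢ ∀x φ(x) → (I θ₀ ∧ I θ₁). -/

import Mathlib

open FirstOrder Language

/-! ### The language `L_OR = {0, 1, +, ×, <}` of ordered rings -/

/-- Function symbols of the language of ordered rings. -/
inductive LorFunc : ℕ → Type
  | zero : LorFunc 0
  | one : LorFunc 0
  | add : LorFunc 2
  | mul : LorFunc 2

/-- Relation symbols of the language of ordered rings: just `<`. -/
inductive LorRel : ℕ → Type
  | lt : LorRel 2

/-- The first-order language of ordered rings. -/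
def Lor : Language := ⟨LorFunc, LorRel⟩

/-- The term `0`. -/
def zeroT {α : Type} : Lor.Term α := Constants.term LorFunc.zero

/-- The term `1`. -/
def oneT {α : Type} : Lor.Term α := Constants.term LorFunc.one

/-- Addition of terms. -/
def addT {α : Type} (t u : Lor.Term α) : Lor.Term α := Functions.apply₂ LorFunc.add t u

/-- Multiplication of terms. -/
def mulT {α : Type} (t u : Lor.Term α) : Lor.Term α := Functions.apply₂ LorFunc.mul t u

/-- The term `2`, an abbreviation for `1 + 1`. -/
def twoT {α : Type} : Lor.Term α := addT oneT oneT

/-- The numeral `k`, i.e. the closed term `(⋯((0+1)+1)+⋯+1)` with `k` ones. -/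
def numT {α : Type} : ℕ → Lor.Term α
  | 0 => zeroT
  | n + 1 => addT (numT n) oneT

/-- The bounded formula `t < u`. -/
def ltBF {α : Type} {n : ℕ} (t u : Lor.Term (α ⊕ Fin n)) : Lor.BoundedFormula α n :=
  Relations.boundedFormula₂ LorRel.lt t u

/-- The formula `t < u`. -/
def ltFml {α : Type} (t u : Lor.Term α) : Lor.Formula α :=
  Relations.formula₂ LorRel.lt t u

/-- The formula `t ≤ u`, an abbreviation for `t < u ∨ t = u`. -/
def leFml {α : Type} (t u : Lor.Term α) : Lor.Formula α :=
  ltFml t u ⊔ Term.equal t u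

/-! ### The base theory `PA⁻` -/

/-- `PA⁻`, the theory of non-negative parts of discretely ordered rings. -/
def PAminus : Lor.Theory :=
  { -- (P1) associativity of +
    ∀' ∀' ∀' (addT (addT &0 &1) &2 =' addT &0 (addT &1 &2)),
    -- (P2) commutativity of +
    ∀' ∀' (addT &0 &1 =' addT &1 &0),
    -- (P3) associativity of ×
    ∀' ∀' ∀' (mulT (mulT &0 &1) &2 =' mulT &0 (mulT &1 &2)),
    -- (P4) commutativity of ×
    ∀' ∀' (mulT &0 &1 =' mulT &1 &0),
    -- (P5) distributivity
    ∀' ∀' ∀' (mulT &0 (addT &1 &2) =' addT (mulT &0 &1) (mulT &0 &2)),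
    -- (P6) x + 0 = x
    ∀' (addT &0 zeroT =' &0),
    -- (P7) x × 0 = 0
    ∀' (mulT &0 zeroT =' zeroT),
    -- (P8) x × 1 = x
    ∀' (mulT &0 oneT =' &0),
    -- (P9) transitivity of <
    ∀' ∀' ∀' (ltBF &0 &1 ⊓ ltBF &1 &2 ⟹ ltBF &0 &2),
    -- (P10) irreflexivity of <
    ∀' ∼(ltBF &0 &0),
    -- (P11) linearity of <
    ∀' ∀' (ltBF &0 &1 ⊔ &0 =' &1 ⊔ ltBF &1 &0),
    -- (P12) x < y → x + z < y + z
    ∀' ∀' ∀' (ltBF &0 &1 ⟹ ltBF (addT &0 &2) (addT &1 &2)),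
    -- (P13) z ≠ 0 ∧ x < y → x × z < y × z
    ∀' ∀' ∀' (∼(&2 =' zeroT) ⊓ ltBF &0 &1 ⟹ ltBF (mulT &0 &2) (mulT &1 &2)),
    -- (P14) x < y ↔ ∃z ((x + z) + 1 = y)
    ∀' ∀' (ltBF &0 &1 ⇔ ∃' (addT (addT &0 &2) oneT =' &1)),
    -- (P15) 0 < 1 ∧ (x > 0 → x ≥ 1)
    ltBF zeroT oneT ⊓ ∀' (ltBF zeroT &0 ⟹ ltBF oneT &0 ⊔ oneT =' &0),
    -- (P16) x ≥ 0
    ∀' (ltBF zeroT &0 ⊔ zeroT =' &0) }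

/-! ### Formulas `θ(x, z̄)` with a distinguished variable `x` and parameters `z̄`

A formula `θ(x, z̄)` with `m` parameters `z̄` and a distinguished induction
variable `x` is represented as `θ : Lor.Formula (Fin m ⊕ Fin 1)`, where the
`Fin m` component gives the parameters and the `Fin 1` component gives `x`. -/

/-- The distinguished variable `x` as a term. -/
def xT {m : ℕ} : Lor.Term (Fin m ⊕ Fin 1) := Term.var (Sum.inr 0)

/-- `θ(t, z̄)`, where `t` is a term possibly involving `x` and the parameters. -/
def substX {m : ℕ} (θ : Lor.Formula (Fin m ⊕ Fin 1)) (t : Lor.Term (Fin m ⊕ Fin 1)) :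
    Lor.Formula (Fin m ⊕ Fin 1) :=
  θ.subst (Sum.elim (fun i => Term.var (Sum.inl i)) fun _ => t)

/-- `θ(t, z̄)` where `t` is a term in the parameters only. -/
def substP {m : ℕ} (θ : Lor.Formula (Fin m ⊕ Fin 1)) (t : Lor.Term (Fin m)) :
    Lor.Formula (Fin m) :=
  θ.subst (Sum.elim (fun i => Term.var i) fun _ => t)

/-- `Formula.iAlls` with its older signature (a relabelling `f : α → β ⊕ γ` applied first),
spelled out verbatim from the older Mathlib definition. -/
noncomputable def iAllsOld {L : Language} {α β γ : Type*} [Finite γ] (f : α → β ⊕ γ)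
    (φ : L.Formula α) : L.Formula β :=
  let e := Classical.choice (Classical.choose_spec (Finite.exists_equiv_fin γ))
  (BoundedFormula.relabel (fun a => Sum.map id e (f a)) φ).alls

/-- `∀x θ(x, z̄)`. -/
noncomputable def allX {m : ℕ} (θ : Lor.Formula (Fin m ⊕ Fin 1)) : Lor.Formula (Fin m) :=
  iAllsOld (fun p => p : Fin m ⊕ Fin 1 → Fin m ⊕ Fin 1) θ

/-- The universal closure of a formula, as a sentence. -/
noncomputable def closeAll {α : Type} [Finite α] (φ : Lor.Formula α) : Lor.Sentence :=
  iAllsOld (Sum.inr : α → Empty ⊕ α) φ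

/-- `∀x' < x, θ(x', z̄)`, a formula with free variable `x` (and parameters). -/
noncomputable def allLtX {m : ℕ} (θ : Lor.Formula (Fin m ⊕ Fin 1)) :
    Lor.Formula (Fin m ⊕ Fin 1) :=
  iAllsOld (fun p => p : (Fin m ⊕ Fin 1) ⊕ Fin 1 → (Fin m ⊕ Fin 1) ⊕ Fin 1)
    (ltFml (Term.var (Sum.inr 0)) (Term.var (Sum.inl (Sum.inr 0))) ⟹
      θ.relabel (Sum.elim (fun i => Sum.inl (Sum.inl i)) fun _ => Sum.inr 0))

/-- `∀x' ≤ x, θ(x', z̄)`, a formula with free variable `x` (and parameters). -/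
noncomputable def allLeX {m : ℕ} (θ : Lor.Formula (Fin m ⊕ Fin 1)) :
    Lor.Formula (Fin m ⊕ Fin 1) :=
  iAllsOld (fun p => p : (Fin m ⊕ Fin 1) ⊕ Fin 1 → (Fin m ⊕ Fin 1) ⊕ Fin 1)
    (leFml (Term.var (Sum.inr 0)) (Term.var (Sum.inl (Sum.inr 0))) ⟹
      θ.relabel (Sum.elim (fun i => Sum.inl (Sum.inl i)) fun _ => Sum.inr 0))

/-- The conjunction `⋀_{k<j} θ(k, z̄)`. -/
def conjNum {m : ℕ} (θ : Lor.Formula (Fin m ⊕ Fin 1)) : ℕ → Lor.Formula (Fin m)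
  | 0 => ⊤
  | j + 1 => conjNum θ j ⊓ substP θ (numT j)

/-- The conjunction `⋀_{k<j} θ(x+k, z̄)`. -/
def conjShift {m : ℕ} (θ : Lor.Formula (Fin m ⊕ Fin 1)) : ℕ → Lor.Formula (Fin m ⊕ Fin 1)
  | 0 => ⊤
  | j + 1 => conjShift θ j ⊓ substX θ (addT xT (numT j))

/-! ### Induction axioms -/

/-- The induction axiom `I_x θ`:
`∀z̄( θ(0,z̄) ∧ ∀x(θ(x,z̄) → θ(x+1,z̄)) → ∀x θ(x,z̄) )`. -/
noncomputable def indAx {m : ℕ} (θ : Lor.Formula (Fin m ⊕ Fin 1)) : Lor.Sentence :=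
  closeAll ((substP θ zeroT ⊓ allX (θ ⟹ substX θ (addT xT oneT))) ⟹ allX θ)

/-- The `<`-induction axiom `I^<_x θ`:
`∀z̄( ∀y(∀x<y θ(x,z̄) → θ(y,z̄)) → ∀x θ(x,z̄) )`. -/
noncomputable def indLtAx {m : ℕ} (θ : Lor.Formula (Fin m ⊕ Fin 1)) : Lor.Sentence :=
  closeAll (allX (allLtX θ ⟹ θ) ⟹ allX θ)

/-- The `(n+1)`-step induction axiom `I^{(n+1)-step}_x θ`:
`∀z̄( ⋀_{k<n+1} θ(k,z̄) ∧ ∀x(θ(x,z̄) → θ(x+n+1,z̄)) → ∀x θ(x,z̄) )`. -/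
noncomputable def indStepAx {m : ℕ} (n : ℕ) (θ : Lor.Formula (Fin m ⊕ Fin 1)) : Lor.Sentence :=
  closeAll ((conjNum θ (n + 1) ⊓ allX (θ ⟹ substX θ (addT xT (numT (n + 1))))) ⟹ allX θ)

/-- The `(n+1)`-induction axiom `I^{n+1}_x θ`:
`∀z̄( ⋀_{k<n+1} θ(k,z̄) ∧ ∀x(⋀_{k<n+1} θ(x+k,z̄) → θ(x+n+1,z̄)) → ∀x θ(x,z̄) )`. -/
noncomputable def indKAx {m : ℕ} (n : ℕ) (θ : Lor.Formula (Fin m ⊕ Fin 1)) : Lor.Sentence :=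
  closeAll ((conjNum θ (n + 1) ⊓ allX (conjShift θ (n + 1) ⟹ substX θ (addT xT (numT (n + 1))))) ⟹
    allX θ)

/-- The polynomial induction axiom `I^p_x θ`:
`∀z̄( θ(0,z̄) ∧ ∀x(θ(x,z̄) → θ(2x,z̄) ∧ θ(2x+1,z̄)) → ∀x θ(x,z̄) )`, where `2x` is `(1+1)×x`. -/
noncomputable def indPAx {m : ℕ} (θ : Lor.Formula (Fin m ⊕ Fin 1)) : Lor.Sentence :=
  closeAll ((substP θ zeroT ⊓
      allX (θ ⟹ substX θ (mulT twoT xT) ⊓ substX θ (addT (mulT twoT xT) oneT))) ⟹ allX θ)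

/-! ### Theories -/

/-- Peano arithmetic: `PA⁻` plus induction for all `L_OR` formulas. -/
noncomputable def PA : Lor.Theory :=
  PAminus ∪ {σ | ∃ (m : ℕ) (θ : Lor.Formula (Fin m ⊕ Fin 1)), σ = indAx θ}

/-- `IOpen`: `PA⁻` plus induction for all quantifier-free `L_OR` formulas. -/
noncomputable def IOpen : Lor.Theory :=
  PAminus ∪ {σ | ∃ (m : ℕ) (θ : Lor.Formula (Fin m ⊕ Fin 1)), θ.IsQF ∧ σ = indAx θ}

/-! ### Notions of inductiveness

A formula `φ(x)` with exactly one free variable `x` is represented as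
`φ : Lor.Formula (Fin 0 ⊕ Fin 1)` (no parameters). -/

/-- Formulas `φ(x)` with exactly one free variable `x`. -/
abbrev OneVarFormula : Type := Lor.Formula (Fin 0 ⊕ Fin 1)

/-- The sentence `∀x φ(x)`. -/
noncomputable def allS (φ : OneVarFormula) : Lor.Sentence := closeAll (allX φ)

/-- `φ(x)` is inductive: `PA⁻ ⊢ φ(0)` and `PA⁻ ⊢ ∀x(φ(x) → φ(x+1))`. -/
noncomputable def IsInductive (φ : OneVarFormula) : Prop :=
  PAminus ⊨ᵇ closeAll (substP φ zeroT) ∧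
    PAminus ⊨ᵇ closeAll (allX (φ ⟹ substX φ (addT xT oneT)))

/-- `φ(x)` is `<`-inductive: `PA⁻ ⊢ ∀y(∀x<y φ(x) → φ(y))`. -/
noncomputable def IsLtInductive (φ : OneVarFormula) : Prop :=
  PAminus ⊨ᵇ closeAll (allX (allLtX φ ⟹ φ))

/-- `φ(x)` is `(n+1)`-step inductive:
`PA⁻ ⊢ ⋀_{k<n+1} φ(k) ∧ ∀x(φ(x) → φ(x+n+1))`. -/
noncomputable def IsStepInductive (n : ℕ) (φ : OneVarFormula) : Prop :=
  PAminus ⊨ᵇ closeAll (conjNum φ (n + 1) ⊓ allX (φ ⟹ substX φ (addT xT (numT (n + 1)))))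

/-- `φ(x)` is `(n+1)`-inductive:
`PA⁻ ⊢ ⋀_{k<n+1} φ(k) ∧ ∀x(⋀_{k<n+1} φ(x+k) → φ(x+n+1))`. -/
noncomputable def IsKInductive (n : ℕ) (φ : OneVarFormula) : Prop :=
  PAminus ⊨ᵇ
    closeAll (conjNum φ (n + 1) ⊓ allX (conjShift φ (n + 1) ⟹ substX φ (addT xT (numT (n + 1)))))

/-- `φ(x)` is p-inductive (polynomially inductive):
`PA⁻ ⊢ φ(0) ∧ ∀x(φ(x) → φ(2x) ∧ φ(2x+1))`. -/
noncomputable def IsPInductive (φ : OneVarFormula) : Prop :=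
  PAminus ⊨ᵇ closeAll (substP φ zeroT ⊓
    allX (φ ⟹ substX φ (mulT twoT xT) ⊓ substX φ (addT (mulT twoT xT) oneT)))

/-! ### Cuts -/

/-- `φ(x)` is a cut: an inductive formula with `PA⁻ ⊢ ∀x∀y(x<y ∧ φ(y) → φ(x))`. -/
noncomputable def IsCut (φ : OneVarFormula) : Prop :=
  IsInductive φ ∧
    PAminus ⊨ᵇ closeAll
      (ltFml (Term.var (Sum.inr 0) : Lor.Term (Fin 0 ⊕ Fin 2)) (Term.var (Sum.inr 1)) ⊓
          φ.relabel (Sum.elim (fun i => Sum.inl i) fun _ => Sum.inr 1) ⟹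
        φ.relabel (Sum.elim (fun i => Sum.inl i) fun _ => Sum.inr 0))

/-- `φ(x)` is an a-cut: a cut with `PA⁻ ⊢ ∀x(φ(x) → φ(x+x))`. -/
noncomputable def IsACut (φ : OneVarFormula) : Prop :=
  IsCut φ ∧ PAminus ⊨ᵇ closeAll (allX (φ ⟹ substX φ (addT xT xT)))

/-- `φ(x)` is an am-cut: an a-cut with `PA⁻ ⊢ ∀x(φ(x) → φ(x×x))`. -/
noncomputable def IsAMCut (φ : OneVarFormula) : Prop :=
  IsACut φ ∧ PAminus ⊨ᵇ closeAll (allX (φ ⟹ substX φ (mulT xT xT)))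
theorem realize_iAllsOld {L : Language} {M : Type*} [L.Structure M] {α β γ : Type*} [Finite γ]
    (f : α → β ⊕ γ) {φ : L.Formula α} {v : β → M} : (iAllsOld f φ).Realize v ↔
      ∀ (i : γ → M), φ.Realize (fun a => Sum.elim v i (f a)) := by
  let e := Classical.choice (Classical.choose_spec (Finite.exists_equiv_fin γ))
  rw [iAllsOld]
  simp only [Nat.add_zero, BoundedFormula.realize_alls, BoundedFormula.realize_relabel,
    Function.comp_def, Fin.castAdd_zero, Sum.elim_map, id_eq]
  refine Equiv.forall_congr ?_ ?_
  · exact ⟨fun v => v ∘ e, fun v => v ∘ e.symm,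
      fun _ => by simp [Function.comp_def],
      fun _ => by simp [Function.comp_def]⟩
  · intro x
    rw [Formula.Realize, iff_iff_eq]
    congr
    · funext i
      exact i.elim0

/-! ### Auxiliary semantics -/

section Sem

variable {M : Type*} [Lor.Structure M]

/-- zero in `M` -/
def mz : M := Structure.funMap (L := Lor) (M := M) (LorFunc.zero : Lor.Functions 0) ![]
/-- one in `M` -/
def mo : M := Structure.funMap (L := Lor) (M := M) (LorFunc.one : Lor.Functions 0) ![]
/-- addition in `M` -/
def ma (x y : M) : M := Structure.funMap (L := Lor) (M := M) (LorFunc.add : Lor.Functions 2) ![x, y]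
/-- less-than in `M` -/
def mlt (x y : M) : Prop := Structure.RelMap (L := Lor) (M := M) (LorRel.lt : Lor.Relations 2) ![x, y]
/-- le in `M` -/
def mle (x y : M) : Prop := mlt x y ∨ x = y

@[simp] lemma realize_zeroT {α : Type} (v : α → M) : (zeroT).realize v = mz := by
  simp only [zeroT, Term.realize_constants]
  exact congrArg (fun xs => Structure.funMap (L := Lor) (M := M) _ xs) (Subsingleton.elim _ _)

@[simp] lemma realize_oneT {α : Type} (v : α → M) : (oneT).realize v = mo := by
  simp only [oneT, Term.realize_constants]
  exact congrArg (fun xs => Structure.funMap (L := Lor) (M := M) _ xs) (Subsingleton.elim _ _)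

@[simp] lemma realize_addT {α : Type} (t u : Lor.Term α) (v : α → M) :
    (addT t u).realize v = ma (t.realize v) (u.realize v) := by
  simp only [addT, ma, Functions.apply₂, Term.realize_functions_apply₂]
  show Structure.funMap _ _ = _
  congr 1
  funext i
  fin_cases i <;> rfl

@[simp] lemma realize_ltFml {α : Type} (t u : Lor.Term α) (v : α → M) :
    (ltFml t u).Realize v ↔ mlt (t.realize v) (u.realize v) := by
  simp [ltFml, mlt]
  show Structure.RelMap _ _ ↔ _
  apply iff_of_eq
  congr 1
  funext i
  fin_cases i <;> simp

@[simp] lemma realize_ltBF {α : Type} {n : ℕ} (t u : Lor.Term (α ⊕ Fin n)) (v : α → M)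
    (xs : Fin n → M) :
    (ltBF t u).Realize v xs ↔ mlt (t.realize (Sum.elim v xs)) (u.realize (Sum.elim v xs)) := by
  simp [ltBF, mlt]
  show Structure.RelMap _ _ ↔ _
  apply iff_of_eq
  congr 1
  funext i
  fin_cases i <;> rfl

@[simp] lemma realize_leFml {α : Type} (t u : Lor.Term α) (v : α → M) :
    (leFml t u).Realize v ↔ mle (t.realize v) (u.realize v) := by
  simp [leFml, mle]

end Sem

section Ax

variable {M : Type*} [Lor.Structure M] [PAminus.Model M]

lemma ax_comm : ∀ x y : M, ma x y = ma y x := by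
  have h := Theory.realize_sentence_of_mem (M := M) PAminus
    (show (∀' ∀' (addT &0 &1 =' addT &1 &0) : Lor.Sentence) ∈ PAminus by simp [PAminus])
  simpa [Sentence.Realize, Formula.Realize, Fin.snoc] using h

lemma ax_add_zero : ∀ x : M, ma x mz = x := by
  have h := Theory.realize_sentence_of_mem (M := M) PAminus
    (show (∀' (addT &0 zeroT =' &0) : Lor.Sentence) ∈ PAminus by simp [PAminus])
  simpa [Sentence.Realize, Formula.Realize, Fin.snoc] using h

lemma ax_trans : ∀ x y z : M, mlt x y ∧ mlt y z → mlt x z := by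
  have h := Theory.realize_sentence_of_mem (M := M) PAminus
    (show (∀' ∀' ∀' (ltBF &0 &1 ⊓ ltBF &1 &2 ⟹ ltBF &0 &2) : Lor.Sentence) ∈ PAminus by
      simp [PAminus])
  simpa [Sentence.Realize, Formula.Realize, Fin.snoc] using h

lemma ax_irrefl : ∀ x : M, ¬ mlt x x := by
  have h := Theory.realize_sentence_of_mem (M := M) PAminus
    (show (∀' ∼(ltBF &0 &0) : Lor.Sentence) ∈ PAminus by simp [PAminus])
  simpa [Sentence.Realize, Formula.Realize, Fin.snoc] using h

lemma ax_total : ∀ x y : M, (mlt x y ∨ x = y) ∨ mlt y x := by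
  have h := Theory.realize_sentence_of_mem (M := M) PAminus
    (show (∀' ∀' (ltBF &0 &1 ⊔ &0 =' &1 ⊔ ltBF &1 &0) : Lor.Sentence) ∈ PAminus by
      simp [PAminus])
  simpa [Sentence.Realize, Formula.Realize, Fin.snoc] using h

lemma ax_mono : ∀ x y z : M, mlt x y → mlt (ma x z) (ma y z) := by
  have h := Theory.realize_sentence_of_mem (M := M) PAminus
    (show (∀' ∀' ∀' (ltBF &0 &1 ⟹ ltBF (addT &0 &2) (addT &1 &2)) : Lor.Sentence) ∈ PAminus by
      simp [PAminus])
  simpa [Sentence.Realize, Formula.Realize, Fin.snoc] using h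

lemma ax_lt_iff : ∀ x y : M, mlt x y ↔ ∃ z, ma (ma x z) mo = y := by
  have h := Theory.realize_sentence_of_mem (M := M) PAminus
    (show (∀' ∀' (ltBF &0 &1 ⇔ ∃' (addT (addT &0 &2) oneT =' &1)) : Lor.Sentence) ∈ PAminus by
      simp [PAminus])
  simpa [Sentence.Realize, Formula.Realize, Fin.snoc] using h

lemma ax_zero_le : ∀ x : M, mlt mz x ∨ mz = x := by
  have h := Theory.realize_sentence_of_mem (M := M) PAminus
    (show (∀' (ltBF zeroT &0 ⊔ zeroT =' &0) : Lor.Sentence) ∈ PAminus by simp [PAminus])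
  simpa [Sentence.Realize, Formula.Realize, Fin.snoc] using h

/-- In a model of `PAminus`, `y ≤ 0 → y = 0`. -/
lemma le_zero {y : M} (h : mle y mz) : y = mz := by
  rcases h with h | h
  · rcases ax_zero_le (M := M) y with h' | h'
    · exact absurd (ax_trans y mz y ⟨h, h'⟩) (ax_irrefl y)
    · exact h'.symm
  · exact h

/-- In a model of `PAminus`, `y < x + 1 → y ≤ x`. -/
lemma lt_succ_le {x y : M} (h : mlt y (ma x mo)) : mle y x := by
  rcases ax_total (M := M) y x with h' | h'
  · exact h'
  · exfalso
    obtain ⟨z, hz⟩ := (ax_lt_iff x y).1 h'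
    have hx1 : mlt (ma x mo) y := by
      rcases ax_zero_le (M := M) z with hz0 | hz0
      · have h1 : mlt x (ma x z) := by
          have := ax_mono mz z x hz0
          rwa [ax_comm mz x, ax_add_zero, ax_comm z x] at this
        have h2 := ax_mono x (ma x z) mo h1
        rwa [hz] at h2
      · rw [← hz0, ax_add_zero] at hz
        rw [hz] at h
        exact absurd h (ax_irrefl _)
    exact absurd (ax_trans _ _ _ ⟨h, hx1⟩) (ax_irrefl y)

/-- In a model of `PAminus`, `y ≤ x + 1 → y ≤ x ∨ y = x + 1`. -/
lemma le_succ {x y : M} (h : mle y (ma x mo)) : mle y x ∨ y = ma x mo := by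
  rcases h with h | h
  · exact Or.inl (lt_succ_le h)
  · exact Or.inr h

end Ax

/-! ### The inductive formula -/

section Psi

variable {m : ℕ}

/-- The induction hypothesis formula for `θ`. -/
noncomputable def hypF (θ : Lor.Formula (Fin m ⊕ Fin 1)) : Lor.Formula (Fin m) :=
  substP θ zeroT ⊓ allX (θ ⟹ substX θ (addT xT oneT))

lemma indAx_eq (θ : Lor.Formula (Fin m ⊕ Fin 1)) :
    indAx θ = closeAll (hypF θ ⟹ allX θ) := rfl

/-- The formula `ψ_θ(x) := ∀z̄ (Hyp_θ(z̄) → ∀y ≤ x, θ(y, z̄))`. -/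
noncomputable def psi (θ : Lor.Formula (Fin m ⊕ Fin 1)) : OneVarFormula :=
  iAllsOld
    (Sum.elim (fun i => Sum.inr i) (fun _ => Sum.inl (Sum.inr 0)) :
      Fin m ⊕ Fin 1 → (Fin 0 ⊕ Fin 1) ⊕ Fin m)
    ((hypF θ).relabel Sum.inl ⟹ allLeX θ)

variable {M : Type*} [Lor.Structure M]

/-- Semantic induction hypothesis. -/
def HypR (θ : Lor.Formula (Fin m ⊕ Fin 1)) (zs : Fin m → M) : Prop :=
  θ.Realize (Sum.elim zs fun _ => (mz : M)) ∧
    ∀ a : M, θ.Realize (Sum.elim zs fun _ => a) → θ.Realize (Sum.elim zs fun _ => ma a mo)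

lemma realize_substP (θ : Lor.Formula (Fin m ⊕ Fin 1)) (t : Lor.Term (Fin m)) (v : Fin m → M) :
    (substP θ t).Realize v ↔ θ.Realize (Sum.elim v fun _ => t.realize v) := by
  rw [substP, Formula.Realize, BoundedFormula.realize_subst]
  rw [show (fun a => Term.realize v (Sum.elim (fun i => Term.var i)
      (fun _ : Fin 1 => t) a)) = Sum.elim v fun _ => t.realize v by
    funext a; cases a <;> simp]
  rfl

lemma realize_substX (θ : Lor.Formula (Fin m ⊕ Fin 1)) (t : Lor.Term (Fin m ⊕ Fin 1))
    (v : Fin m ⊕ Fin 1 → M) :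
    (substX θ t).Realize v ↔
      θ.Realize (Sum.elim (fun i => v (Sum.inl i)) fun _ => t.realize v) := by
  rw [substX, Formula.Realize, BoundedFormula.realize_subst]
  rw [show (fun a => Term.realize v (Sum.elim (fun i => Term.var (Sum.inl i))
      (fun _ : Fin 1 => t) a)) = Sum.elim (fun i => v (Sum.inl i)) fun _ => t.realize v by
    funext a; cases a <;> simp]
  rfl

lemma realize_allX (θ : Lor.Formula (Fin m ⊕ Fin 1)) (v : Fin m → M) :
    (allX θ).Realize v ↔ ∀ a : M, θ.Realize (Sum.elim v fun _ => a) := by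
  rw [allX, realize_iAllsOld]
  constructor
  · intro h a
    exact h fun _ => a
  · intro h i
    have : i = fun _ => i 0 := funext fun j => by rw [Subsingleton.elim j 0]
    rw [this]
    exact h (i 0)

lemma realize_allLeX (θ : Lor.Formula (Fin m ⊕ Fin 1)) (v : Fin m ⊕ Fin 1 → M) :
    (allLeX θ).Realize v ↔
      ∀ y : M, mle y (v (Sum.inr 0)) →
        θ.Realize (Sum.elim (fun i => v (Sum.inl i)) fun _ => y) := by
  rw [allLeX, realize_iAllsOld]
  constructor
  · intro h y hy
    have := h fun _ => y
    rw [Formula.realize_imp] at this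
    have := this (by simpa using hy)
    rw [Formula.realize_relabel] at this
    convert this using 2
    funext a
    cases a <;> simp
  · intro h i
    rw [Formula.realize_imp]
    intro hle
    rw [Formula.realize_relabel]
    simp only [realize_leFml] at hle
    have := h (i 0) (by simpa using hle)
    convert this using 2
    funext a
    cases a <;> simp

lemma realize_hypF (θ : Lor.Formula (Fin m ⊕ Fin 1)) (zs : Fin m → M) :
    (hypF θ).Realize zs ↔ HypR θ zs := by
  rw [hypF, Formula.realize_inf, realize_substP, realize_allX, HypR]
  simp only [realize_zeroT]
  refine and_congr Iff.rfl (forall_congr' fun a => ?_)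
  rw [Formula.realize_imp, realize_substX]
  refine imp_congr Iff.rfl (iff_of_eq (congrArg _ ?_))
  funext b
  cases b with
  | inl i => simp
  | inr j => simp [xT]

lemma realize_closeAll {α : Type} [Finite α] (φ : Lor.Formula α) :
    (closeAll φ).Realize M ↔ ∀ v : α → M, φ.Realize v := by
  rw [closeAll, Sentence.Realize, realize_iAllsOld]
  refine forall_congr' fun v => iff_of_eq (congrArg _ ?_)
  funext a
  rfl

lemma realize_psi (θ : Lor.Formula (Fin m ⊕ Fin 1)) (v : Fin 0 ⊕ Fin 1 → M) :
    (psi θ).Realize v ↔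
      ∀ zs : Fin m → M, HypR θ zs →
        ∀ y : M, mle y (v (Sum.inr 0)) → θ.Realize (Sum.elim zs fun _ => y) := by
  rw [psi, realize_iAllsOld]
  refine forall_congr' fun zs => ?_
  rw [Formula.realize_imp, Formula.realize_relabel, realize_allLeX]
  constructor
  · intro h hyp y hy
    have h' := h (by rw [realize_hypF]; exact hyp) y (by simpa using hy)
    exact h'
  · intro h hyp y hy
    have hyp' : (hypF θ).Realize zs := hyp
    rw [realize_hypF] at hyp'
    exact h hyp' y hy

end Psi

/-- For all `L_OR` formulas `θ₀(x, z̄)` and `θ₁(x, z̄)`, there is an inductive formula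
`φ(x)` such that `PA⁻ ⊢ ∀x φ(x) → (I θ₀ ∧ I θ₁)`. -/
theorem stmt1 {m₀ m₁ : ℕ} (θ₀ : Lor.Formula (Fin m₀ ⊕ Fin 1))
    (θ₁ : Lor.Formula (Fin m₁ ⊕ Fin 1)) :
    ∃ φ : OneVarFormula, IsInductive φ ∧ PAminus ⊨ᵇ (allS φ ⟹ indAx θ₀ ⊓ indAx θ₁) := by
  refine ⟨psi θ₀ ⊓ psi θ₁, ⟨?_, ?_⟩, ?_⟩
  · -- φ(0)
    rw [Theory.models_sentence_iff]
    intro N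
    rw [realize_closeAll]
    intro v
    rw [realize_substP, Formula.realize_inf, realize_psi, realize_psi]
    constructor <;>
    · intro zs hyp y hy
      have hy0 : mle y (mz : N) := by simpa using hy
      rw [le_zero hy0]
      exact hyp.1
  · -- φ(x) → φ(x+1)
    rw [Theory.models_sentence_iff]
    intro N
    rw [realize_closeAll]
    intro v
    rw [realize_allX]
    intro a
    rw [Formula.realize_imp, Formula.realize_inf, realize_substX, Formula.realize_inf]
    intro h
    rw [realize_psi, realize_psi] at h
    rw [realize_psi, realize_psi]
    constructor <;>
    · intro zs hyp y hy
      have hy' : mle y (ma (a : N) mo) := by simpa [xT] using hy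
      first
        | (rcases le_succ hy' with h' | h'
           · exact h.1 zs hyp y h'
           · rw [h']
             exact hyp.2 a (h.1 zs hyp a (Or.inr rfl)))
        | (rcases le_succ hy' with h' | h'
           · exact h.2 zs hyp y h'
           · rw [h']
             exact hyp.2 a (h.2 zs hyp a (Or.inr rfl)))
  · -- ∀x φ(x) → I θ₀ ∧ I θ₁
    rw [Theory.models_sentence_iff]
    intro N
    simp only [Sentence.Realize, Formula.realize_imp, Formula.realize_inf]
    intro hAll
    have hφ : ∀ a : N, ((psi θ₀).Realize (Sum.elim (finZeroElim : Fin 0 → N) fun _ => a) ∧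
        (psi θ₁).Realize (Sum.elim (finZeroElim : Fin 0 → N) fun _ => a)) := by
      have := (realize_closeAll _).1 hAll finZeroElim
      rw [realize_allX] at this
      intro a
      have h := this a
      rwa [Formula.realize_inf] at h
    constructor
    · rw [indAx_eq]
      refine (realize_closeAll _).2 ?_
      intro zs
      rw [Formula.realize_imp, realize_hypF, realize_allX]
      intro hyp a
      have h := (hφ a).1
      rw [realize_psi] at h
      exact h zs hyp a (Or.inr rfl)
    · rw [indAx_eq]
      refine (realize_closeAll _).2 ?_
      intro zs
      rw [Formula.realize_imp, realize_hypF, realize_allX]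
      intro hyp a
      have h := (hφ a).2
      rw [realize_psi] at h
      exact h zs hyp a (Or.inr rfl)
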